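/- Let L_♯, L_⋆ ∈ ℝ^{n×r} with L_⋆ = U_⋆·G^{1/2} where U_⋆ has orthonormal columns and G is an r×r positive definite diagonal matrix, and let Δ = L_♯ − L_⋆. If ‖Δ·G^{−1/2}‖ < 1 (spectral norm), then L_♯ has full column rank and ‖L_♯·(L_♯ᴴ·L_♯)^{−1}·G^{1/2}‖ ≤ 1/(1 − ‖Δ·G^{−1/2}‖). -/

import Mathlib

open Matrix BigOperators

/-- Frobenius norm of a real matrix. -/
noncomputable def frob {m n : Type*} [Fintype m] [Fintype n] (A : Matrix m n ℝ) : ℝ :=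
  Real.sqrt (∑ i, ∑ j, (A i j) ^ 2)

/-- Spectral norm (largest singular value) of a real matrix. -/
noncomputable def specNorm {m n : Type*} [Fintype m] [Fintype n] [DecidableEq n]
    (A : Matrix m n ℝ) : ℝ :=
  Real.sqrt (⨆ i, (Matrix.isHermitian_conjTranspose_mul_self A).eigenvalues i)

/-- Smallest singular value (√(λ_min(AᴴA)) convention). -/
noncomputable def sigmaMin {m n : Type*} [Fintype m] [Fintype n] [DecidableEq n]
    (A : Matrix m n ℝ) : ℝ :=
  Real.sqrt (⨅ i, (Matrix.isHermitian_conjTranspose_mul_self A).eigenvalues i)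

/-- Maximum Euclidean row norm ‖·‖₂,∞. -/
noncomputable def rowTwoInf {m n : Type*} [Fintype m] [Fintype n] (A : Matrix m n ℝ) : ℝ :=
  ⨆ i, Real.sqrt (∑ j, (A i j) ^ 2)

/-- Entrywise sup norm ‖·‖∞. -/
noncomputable def entryInf {m n : Type*} [Fintype m] [Fintype n] (A : Matrix m n ℝ) : ℝ :=
  ⨆ i, ⨆ j, |A i j|

/-! ### Auxiliary lemmas -/

/-- Euclidean norm of a plain vector. -/
noncomputable def en {m : Type*} [Fintype m] (y : m → ℝ) : ℝ :=
  ‖(WithLp.equiv 2 (m → ℝ)).symm y‖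

lemma en_nonneg {m : Type*} [Fintype m] (y : m → ℝ) : 0 ≤ en y := norm_nonneg _

lemma en_sq {m : Type*} [Fintype m] (y : m → ℝ) : en y ^ 2 = y ⬝ᵥ y := by
  rw [en, EuclideanSpace.norm_eq]
  rw [Real.sq_sqrt (by positivity)]
  simp [dotProduct, Real.norm_eq_abs, sq_abs, sq]

lemma en_sub_le {m : Type*} [Fintype m] (y z : m → ℝ) : en (y - z) ≤ en y + en z := by
  simpa [en] using norm_sub_le ((WithLp.equiv 2 (m → ℝ)).symm y) ((WithLp.equiv 2 (m → ℝ)).symm z)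

lemma dot_le_en_mul {m : Type*} [Fintype m] (y z : m → ℝ) : y ⬝ᵥ z ≤ en y * en z := by
  have h : y ⬝ᵥ z = inner ℝ ((WithLp.equiv 2 (m → ℝ)).symm y) ((WithLp.equiv 2 (m → ℝ)).symm z) := by
    simp [PiLp.inner_apply, dotProduct, mul_comm]
  rw [h]
  exact real_inner_le_norm _ _

lemma dot_self_pos {m : Type*} [Fintype m] {y : m → ℝ} (hy : y ≠ 0) : 0 < y ⬝ᵥ y := by
  rcases lt_or_eq_of_le (Finset.sum_nonneg fun i _ => mul_self_nonneg (y i) : (0:ℝ) ≤ y ⬝ᵥ y)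
    with h | h
  · exact h
  · exact absurd (dotProduct_self_eq_zero.mp h.symm) hy

lemma quad_eig_sum {r : Type*} [Fintype r] [DecidableEq r] {C : Matrix r r ℝ}
    (hC : C.IsHermitian) (x : r → ℝ) :
    ∃ y : r → ℝ, x ⬝ᵥ (C *ᵥ x) = ∑ i, hC.eigenvalues i * y i ^ 2 ∧ x ⬝ᵥ x = ∑ i, y i ^ 2 := by
  set V : Matrix r r ℝ := (hC.eigenvectorUnitary : Matrix r r ℝ) with hV
  have hVV : star V * V = 1 := Unitary.coe_star_mul_self hC.eigenvectorUnitary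
  have hVV' : V * star V = 1 := Unitary.coe_mul_star_self hC.eigenvectorUnitary
  have hstar : star V = Vᵀ := by
    rw [Matrix.star_eq_conjTranspose, conjTranspose]
    ext i j; simp
  refine ⟨star V *ᵥ x, ?_, ?_⟩
  · conv_lhs => rw [hC.spectral_theorem, Unitary.conjStarAlgAut_apply, ← hV]
    rw [← mulVec_mulVec, ← mulVec_mulVec, dotProduct_mulVec, hstar, ← mulVec_transpose]
    have : (RCLike.ofReal ∘ hC.eigenvalues : r → ℝ) = hC.eigenvalues := by
      ext i; simp [RCLike.ofReal]
    rw [this]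
    simp [dotProduct, mulVec_diagonal]
    congr 1; ext i; ring
  · have key : (star V *ᵥ x) ⬝ᵥ (star V *ᵥ x) = x ⬝ᵥ ((V * star V) *ᵥ x) := by
      rw [← mulVec_mulVec]
      conv_rhs => rw [dotProduct_mulVec, hstar]
      rw [hstar, mulVec_transpose]
    rw [hVV', one_mulVec] at key
    rw [← key]
    simp [dotProduct, sq]

lemma dot_AtA {n r : Type*} [Fintype n] [Fintype r] (A : Matrix n r ℝ) (x : r → ℝ) :
    x ⬝ᵥ ((Aᴴ * A) *ᵥ x) = (A *ᵥ x) ⬝ᵥ (A *ᵥ x) := by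
  have hA : (Aᴴ : Matrix r n ℝ) = Aᵀ := by ext i j; simp [conjTranspose_apply]
  rw [hA, ← mulVec_mulVec, mulVec_transpose, dotProduct_comm, dotProduct_mulVec]

lemma specNorm_nonneg {n r : Type*} [Fintype n] [Fintype r] [DecidableEq r]
    (A : Matrix n r ℝ) : 0 ≤ specNorm A := Real.sqrt_nonneg _

lemma sup_eig_nonneg {n r : Type*} [Fintype n] [Fintype r] [DecidableEq r] [Nonempty r]
    (A : Matrix n r ℝ) : 0 ≤ ⨆ i, (Matrix.isHermitian_conjTranspose_mul_self A).eigenvalues i := by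
  obtain ⟨i⟩ := (inferInstance : Nonempty r)
  exact le_trans (Matrix.eigenvalues_conjTranspose_mul_self_nonneg A i)
    (le_ciSup (Finite.bddAbove_range _) i)

lemma specNorm_sq {n r : Type*} [Fintype n] [Fintype r] [DecidableEq r] [Nonempty r]
    (A : Matrix n r ℝ) :
    specNorm A ^ 2 = ⨆ i, (Matrix.isHermitian_conjTranspose_mul_self A).eigenvalues i :=
  Real.sq_sqrt (sup_eig_nonneg A)

/-- The operator-norm bound `‖A x‖ ≤ ‖A‖ ‖x‖`. -/
lemma en_mulVec_le {n r : Type*} [Fintype n] [Fintype r] [DecidableEq r] [Nonempty r]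
    (A : Matrix n r ℝ) (x : r → ℝ) : en (A *ᵥ x) ≤ specNorm A * en x := by
  have hsq : en (A *ᵥ x) ^ 2 ≤ (specNorm A * en x) ^ 2 := by
    rw [en_sq, ← dot_AtA A x, mul_pow, specNorm_sq, en_sq]
    obtain ⟨y, h1, h2⟩ := quad_eig_sum (Matrix.isHermitian_conjTranspose_mul_self A) x
    rw [h1, h2, Finset.mul_sum]
    refine Finset.sum_le_sum fun i _ => ?_
    exact mul_le_mul_of_nonneg_right (le_ciSup (Finite.bddAbove_range _) i) (sq_nonneg _)
  calc en (A *ᵥ x) = Real.sqrt (en (A *ᵥ x) ^ 2) := (Real.sqrt_sq (en_nonneg _)).symm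
    _ ≤ Real.sqrt ((specNorm A * en x) ^ 2) := Real.sqrt_le_sqrt hsq
    _ = specNorm A * en x := Real.sqrt_sq (mul_nonneg (specNorm_nonneg A) (en_nonneg x))

/-- Converse: a uniform bound on `‖A x‖` bounds the spectral norm. -/
lemma specNorm_le_of_bound {n r : Type*} [Fintype n] [Fintype r] [DecidableEq r] [Nonempty r]
    (A : Matrix n r ℝ) {c : ℝ} (hc : 0 ≤ c) (h : ∀ x, en (A *ᵥ x) ≤ c * en x) :
    specNorm A ≤ c := by
  set hH := Matrix.isHermitian_conjTranspose_mul_self A with hHdef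
  obtain ⟨i0, hi0⟩ := Finite.exists_max hH.eigenvalues
  have hsup : (⨆ i, hH.eigenvalues i) = hH.eigenvalues i0 :=
    le_antisymm (ciSup_le hi0) (le_ciSup (Finite.bddAbove_range _) i0)
  set v : r → ℝ := ⇑(hH.eigenvectorBasis i0) with hv
  have hvne : v ≠ 0 := by
    intro hz
    exact hH.eigenvectorBasis.orthonormal.ne_zero i0 (by ext i; exact congrFun hz i)
  have hvv : 0 < v ⬝ᵥ v := dot_self_pos hvne
  have heig : (Aᴴ * A) *ᵥ v = hH.eigenvalues i0 • v := hH.mulVec_eigenvectorBasis i0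
  have hq : hH.eigenvalues i0 * (v ⬝ᵥ v) = (A *ᵥ v) ⬝ᵥ (A *ᵥ v) := by
    rw [← dot_AtA A v, heig]
    simp only [dotProduct, Pi.smul_apply, smul_eq_mul, Finset.mul_sum]
    exact Finset.sum_congr rfl fun i _ => by ring
  have hb : hH.eigenvalues i0 * (v ⬝ᵥ v) ≤ c ^ 2 * (v ⬝ᵥ v) := by
    rw [hq, ← en_sq]
    calc en (A *ᵥ v) ^ 2 ≤ (c * en v) ^ 2 := by
          have := h v
          have h0 := en_nonneg (A *ᵥ v)
          nlinarith
      _ = c ^ 2 * (v ⬝ᵥ v) := by rw [mul_pow, en_sq]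
  have : hH.eigenvalues i0 ≤ c ^ 2 := le_of_mul_le_mul_right (by linarith) hvv
  show Real.sqrt (⨆ i, hH.eigenvalues i) ≤ c
  rw [hsup]
  calc Real.sqrt (hH.eigenvalues i0) ≤ Real.sqrt (c ^ 2) := Real.sqrt_le_sqrt this
    _ = c := Real.sqrt_sq hc

theorem stmt_7 {n r : Type*} [Fintype n] [Fintype r] [DecidableEq r]
    (U L : Matrix n r ℝ) (g : r → ℝ) (hg : ∀ i, 0 < g i)
    (hU : Uᵀ * U = 1)
    (hlt : specNorm ((L - U * Matrix.diagonal g) * Matrix.diagonal (fun i => (g i)⁻¹)) < 1) :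
    L.rank = Fintype.card r ∧
    specNorm (L * (Lᵀ * L)⁻¹ * Matrix.diagonal g) ≤
      1 / (1 - specNorm ((L - U * Matrix.diagonal g) * Matrix.diagonal (fun i => (g i)⁻¹))) := by
  rcases isEmpty_or_nonempty r with hre | hre
  · constructor
    · have h1 : L.rank ≤ Fintype.card r := L.rank_le_card_width
      have h2 : Fintype.card r = 0 := Fintype.card_eq_zero
      omega
    · rw [specNorm, specNorm, Real.iSup_of_isEmpty, Real.iSup_of_isEmpty, Real.sqrt_zero]
      norm_num
  · set D := Matrix.diagonal g with hD
    set Dinv := Matrix.diagonal (fun i => (g i)⁻¹) with hDinv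
    set E := (L - U * D) * Dinv with hEdef
    set δ := specNorm E with hδ
    have hδ0 : 0 ≤ δ := specNorm_nonneg _
    have h1δ : 0 < 1 - δ := by linarith
    have hDDinv : D * Dinv = 1 := by
      rw [hD, hDinv, diagonal_mul_diagonal]
      convert diagonal_one
      exact mul_inv_cancel₀ (hg _).ne'
    have hDinvD : Dinv * D = 1 := by
      rw [hD, hDinv, diagonal_mul_diagonal]
      convert diagonal_one
      exact inv_mul_cancel₀ (hg _).ne'
    have hE' : L * Dinv = U + E := by
      rw [hEdef, Matrix.sub_mul, Matrix.mul_assoc, hDDinv, Matrix.mul_one]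
      abel
    have hUH : (Uᴴ : Matrix r n ℝ) * U = 1 := by
      have : (Uᴴ : Matrix r n ℝ) = Uᵀ := by ext i j; simp [conjTranspose_apply]
      rw [this, hU]
    have hUx : ∀ x : r → ℝ, en (U *ᵥ x) = en x := by
      intro x
      have h1 : en (U *ᵥ x) ^ 2 = en x ^ 2 := by
        rw [en_sq, en_sq, ← dot_AtA U x, hUH, one_mulVec]
      calc en (U *ᵥ x) = Real.sqrt (en (U *ᵥ x) ^ 2) := (Real.sqrt_sq (en_nonneg _)).symm
        _ = Real.sqrt (en x ^ 2) := by rw [h1]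
        _ = en x := Real.sqrt_sq (en_nonneg _)
    have hlow : ∀ w : r → ℝ, (1 - δ) * en w ≤ en (L *ᵥ (Dinv *ᵥ w)) := by
      intro w
      have h0 : L *ᵥ (Dinv *ᵥ w) = U *ᵥ w + E *ᵥ w := by
        rw [mulVec_mulVec, hE', add_mulVec]
      have h1 : en (U *ᵥ w) ≤ en (U *ᵥ w + E *ᵥ w) + en (E *ᵥ w) := by
        have := en_sub_le (U *ᵥ w + E *ᵥ w) (E *ᵥ w)
        simpa using this
      have h2 : en (E *ᵥ w) ≤ δ * en w := en_mulVec_le E w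
      rw [h0]
      have h3 := hUx w
      linarith
    have hLH : (Lᴴ : Matrix r n ℝ) = Lᵀ := by ext i j; simp [conjTranspose_apply]
    have hLpos : ∀ x : r → ℝ, x ≠ 0 → 0 < (L *ᵥ x) ⬝ᵥ (L *ᵥ x) := by
      intro x hx
      have hw : x = Dinv *ᵥ (D *ᵥ x) := by
        rw [mulVec_mulVec, hDinvD, one_mulVec]
      have hwne : (D *ᵥ x) ≠ 0 := by
        intro h0
        apply hx
        rw [hw, h0, mulVec_zero]
      have h1 : (1 - δ) * en (D *ᵥ x) ≤ en (L *ᵥ x) := by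
        conv_rhs => rw [hw]
        exact hlow (D *ᵥ x)
      have h2 : 0 < en (D *ᵥ x) := by
        have := dot_self_pos hwne
        have h3 := en_sq (D *ᵥ x)
        nlinarith [en_nonneg (D *ᵥ x)]
      have h4 : 0 < en (L *ᵥ x) := lt_of_lt_of_le (by positivity) h1
      have h5 := en_sq (L *ᵥ x)
      nlinarith
    have hposdef : (Lᵀ * L).PosDef := by
      rw [posDef_iff_dotProduct_mulVec]
      constructor
      · have := Matrix.isHermitian_conjTranspose_mul_self L
        rwa [hLH] at this
      · intro x hx
        have h1 : star x ⬝ᵥ ((Lᵀ * L) *ᵥ x) = (L *ᵥ x) ⬝ᵥ (L *ᵥ x) := by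
          rw [star_trivial, ← hLH, dot_AtA]
        rw [h1]
        exact hLpos x hx
    have hunit : IsUnit (Lᵀ * L).det := hposdef.det_pos.ne'.isUnit
    constructor
    · rw [← Matrix.rank_transpose_mul_self]
      exact Matrix.rank_of_isUnit _ ((Matrix.isUnit_iff_isUnit_det _).mpr hunit)
    · set K := (Lᵀ * L)⁻¹ with hK
      have hKL : (Lᵀ * L) * K = 1 := Matrix.mul_nonsing_inv _ hunit
      have main : ∀ x : r → ℝ, en ((L * K * D) *ᵥ x) ≤ (1 / (1 - δ)) * en x := by
        intro x
        set y := K *ᵥ (D *ᵥ x) with hy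
        have hMx : (L * K * D) *ᵥ x = L *ᵥ y := by
          rw [hy, mulVec_mulVec, mulVec_mulVec, Matrix.mul_assoc]
        set w := D *ᵥ y with hwdef
        have hLy : L *ᵥ y = L *ᵥ (Dinv *ᵥ w) := by
          have hback : Dinv *ᵥ w = y := by
            rw [hwdef, mulVec_mulVec, mulVec_mulVec, hDinvD, Matrix.one_mul]
          rw [hback]
        have h1 : en (L *ᵥ y) ^ 2 = w ⬝ᵥ x := by
          rw [en_sq]
          have e1 : (L *ᵥ y) ⬝ᵥ (L *ᵥ y) = y ⬝ᵥ ((Lᵀ * L) *ᵥ y) := by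
            rw [← hLH, dot_AtA]
          have e2 : (Lᵀ * L) *ᵥ y = D *ᵥ x := by
            rw [hy, mulVec_mulVec, mulVec_mulVec, hKL, Matrix.one_mul]
          have e3 : y ⬝ᵥ (D *ᵥ x) = w ⬝ᵥ x := by
            rw [dotProduct_mulVec, hwdef]
            congr 1
            rw [← mulVec_transpose, hD, diagonal_transpose]
          rw [e1, e2, e3]
        have h2 : w ⬝ᵥ x ≤ en w * en x := dot_le_en_mul w x
        have h3 : (1 - δ) * en w ≤ en (L *ᵥ y) := by rw [hLy]; exact hlow w
        rw [hMx]
        set a := en (L *ᵥ y) with ha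
        have ha0 : 0 ≤ a := en_nonneg _
        have hc0 : 0 ≤ en x := en_nonneg _
        have hb0 : 0 ≤ en w := en_nonneg _
        rcases eq_or_lt_of_le ha0 with h | h
        · rw [← h]; positivity
        · rw [div_mul_eq_mul_div, le_div_iff₀ h1δ]
          have key : (1 - δ) * a ^ 2 ≤ a * en x := by
            calc (1 - δ) * a ^ 2 ≤ (1 - δ) * (en w * en x) := by
                  apply mul_le_mul_of_nonneg_left _ (le_of_lt h1δ)
                  rw [h1]; exact h2
              _ = ((1 - δ) * en w) * en x := by ring
              _ ≤ a * en x := mul_le_mul_of_nonneg_right h3 hc0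
          have := mul_le_mul_of_nonneg_right key (le_of_lt (inv_pos.mpr h))
          calc a * (1 - δ) = ((1 - δ) * a ^ 2) * a⁻¹ := by field_simp
            _ ≤ (a * en x) * a⁻¹ := mul_le_mul_of_nonneg_right key (by positivity)
            _ = en x := by field_simp
            _ = 1 * en x := (one_mul _).symm
      exact specNorm_le_of_bound _ (by positivity) main
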